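/- For λ > −1, define β₁(t;λ) = μ₂(t;λ)/μ₀(t;λ), where μ₀(t;λ) = ∫_0^{∞} s^{λ} exp(ts − s³) ds and μ₂(t;λ) = ∫_0^{∞} s^{λ+1} exp(ts − s³) ds. Then β₁(·;λ) is twice differentiable on ℝ and satisfies the second-order nonlinear differential equation β₁'' + 3 β₁ β₁' + β₁³ − (t/3) β₁ = (λ + 1)/3 for all t ∈ ℝ, where primes denote differentiation with respect to t. -/

import Mathlib

open MeasureTheory Set Filter Real

namespace SexticFreud

noncomputable def M (p t : ℝ) : ℝ := ∫ s in Set.Ioi (0 : ℝ), s ^ p * Real.exp (t * s - s ^ 3)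

lemma key_bound (t s : ℝ) (hs : 0 < s) : t * s - s ^ 3 ≤ (|t| + 1) ^ 2 - s := by
  have h1 : t * s ≤ |t| * s := by
    have := le_abs_self t
    nlinarith
  have hc : (1:ℝ) ≤ |t| + 1 := by nlinarith [abs_nonneg t]
  rcases le_or_gt s (|t| + 1) with h | h
  · nlinarith [abs_nonneg t, sq_nonneg s, pow_pos hs 3]
  · nlinarith [abs_nonneg t, mul_pos hs hs]

lemma cont_integrand (p t : ℝ) :
    ContinuousOn (fun s : ℝ => s ^ p * Real.exp (t * s - s ^ 3)) (Set.Ioi 0) := by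
  intro s hs
  apply ContinuousAt.continuousWithinAt
  exact (Real.continuousAt_rpow_const s p (Or.inl (ne_of_gt hs))).mul
    (Real.continuous_exp.continuousAt.comp
      (((continuous_const.mul continuous_id).sub (continuous_pow 3)).continuousAt))

lemma meas_integrand (p t : ℝ) :
    AEStronglyMeasurable (fun s : ℝ => s ^ p * Real.exp (t * s - s ^ 3))
      (volume.restrict (Set.Ioi 0)) :=
  (cont_integrand p t).aestronglyMeasurable measurableSet_Ioi

lemma int_M (p t : ℝ) (hp : -1 < p) :
    IntegrableOn (fun s : ℝ => s ^ p * Real.exp (t * s - s ^ 3)) (Set.Ioi 0) := by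
  have hg : IntegrableOn (fun s : ℝ => Real.exp ((|t|+1)^2) * (Real.exp (-s) * s ^ p))
      (Set.Ioi 0) := by
    have := (Real.GammaIntegral_convergent (show 0 < p + 1 by linarith)).const_mul
      (Real.exp ((|t|+1)^2))
    simp at this; exact this
  refine Integrable.mono' hg (meas_integrand p t) ?_
  rw [ae_restrict_iff' measurableSet_Ioi]
  filter_upwards with s hs
  have hpos : (0:ℝ) < s ^ p * Real.exp (t * s - s ^ 3) :=
    mul_pos (Real.rpow_pos_of_pos hs p) (Real.exp_pos _)
  rw [Real.norm_eq_abs, abs_of_pos hpos]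
  have h1 : Real.exp (t * s - s ^ 3) ≤ Real.exp ((|t|+1)^2 - s) :=
    Real.exp_le_exp.2 (key_bound t s hs)
  calc s ^ p * Real.exp (t * s - s ^ 3) ≤ s ^ p * Real.exp ((|t|+1)^2 - s) := by
        exact mul_le_mul_of_nonneg_left h1 (Real.rpow_nonneg hs.le p)
    _ = Real.exp ((|t|+1)^2) * (Real.exp (-s) * s ^ p) := by
        rw [sub_eq_add_neg, Real.exp_add]; ring

lemma pos_M (p t : ℝ) (hp : -1 < p) : 0 < M p t := by
  rw [M, setIntegral_pos_iff_support_of_nonneg_ae]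
  · have hsupp : Set.Ioi (0:ℝ) ⊆ Function.support
        (fun s : ℝ => s ^ p * Real.exp (t * s - s ^ 3)) := fun s hs =>
      (mul_pos (Real.rpow_pos_of_pos hs p) (Real.exp_pos _)).ne'
    refine lt_of_lt_of_le ?_ (measure_mono (Set.subset_inter hsupp subset_rfl))
    simp [Real.volume_Ioi]
  · rw [EventuallyLE, ae_restrict_iff' measurableSet_Ioi]
    filter_upwards with s hs
    exact (mul_pos (Real.rpow_pos_of_pos hs p) (Real.exp_pos _)).le
  · exact int_M p t hp

lemma hasDerivAt_M (p : ℝ) (hp : -1 < p) (t : ℝ) : HasDerivAt (M p) (M (p + 1) t) t := by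
  have hp1 : (-1:ℝ) < p + 1 := by linarith
  have key := hasDerivAt_integral_of_dominated_loc_of_deriv_le
    (F := fun u => fun s : ℝ => s ^ p * Real.exp (u * s - s ^ 3))
    (F' := fun u => fun s : ℝ => s ^ (p + 1) * Real.exp (u * s - s ^ 3))
    (x₀ := t) (s := Metric.ball t 1) (μ := volume.restrict (Set.Ioi 0))
    (bound := fun s : ℝ => s ^ (p + 1) * Real.exp ((|t| + 1) * s - s ^ 3))
    (Metric.ball_mem_nhds t one_pos)
    (Filter.Eventually.of_forall fun u => meas_integrand p u)
    (int_M p t hp)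
    (meas_integrand (p + 1) t)
    ?_ (int_M (p + 1) (|t| + 1) hp1) ?_
  · exact key.2
  · rw [ae_restrict_iff' measurableSet_Ioi]
    filter_upwards with s hs u hu
    have hpos : (0:ℝ) < s ^ (p+1) * Real.exp (u * s - s ^ 3) :=
      mul_pos (Real.rpow_pos_of_pos hs _) (Real.exp_pos _)
    rw [Real.norm_eq_abs, abs_of_pos hpos]
    have hu' : u ≤ |t| + 1 := by
      have := abs_sub_abs_le_abs_sub u t
      have h2 := mem_ball_iff_norm.1 hu
      rw [Real.norm_eq_abs] at h2
      have := le_abs_self u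
      linarith
    have : Real.exp (u * s - s ^ 3) ≤ Real.exp ((|t| + 1) * s - s ^ 3) := by
      apply Real.exp_le_exp.2
      have : u * s ≤ (|t| + 1) * s := mul_le_mul_of_nonneg_right hu' hs.le
      linarith
    exact mul_le_mul_of_nonneg_left this (Real.rpow_nonneg hs.le _)
  · rw [ae_restrict_iff' measurableSet_Ioi]
    filter_upwards with s hs u _
    have h1 : HasDerivAt (fun u : ℝ => u * s - s ^ 3) s u :=
      (hasDerivAt_mul_const s).sub_const _
    have h2 := (h1.exp).const_mul (s ^ p)
    refine h2.congr_deriv ?_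
    rw [Real.rpow_add_one (ne_of_gt hs)]
    ring

lemma ibp (l : ℝ) (hl : -1 < l) (t : ℝ) :
    3 * M (l + 3) t = t * M (l + 1) t + (l + 1) * M l t := by
  have hl1 : (0:ℝ) < l + 1 := by linarith
  set f : ℝ → ℝ := fun s => s ^ (l + 1) * Real.exp (t * s - s ^ 3) with hf
  set f' : ℝ → ℝ := fun s =>
    (l + 1) * (s ^ l * Real.exp (t * s - s ^ 3)) +
      (t * (s ^ (l+1) * Real.exp (t * s - s ^ 3)) - 3 * (s ^ (l+3) * Real.exp (t * s - s ^ 3)))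
    with hf'
  have hint : IntegrableOn f' (Set.Ioi 0) := by
    exact (((int_M l t hl).const_mul (l+1)).add
      (((int_M (l+1) t (by linarith)).const_mul t).sub
        ((int_M (l+3) t (by linarith)).const_mul 3)))
  have hderiv : ∀ s ∈ Set.Ioi (0:ℝ), HasDerivAt f (f' s) s := by
    intro s hs
    have h1 : HasDerivAt (fun s : ℝ => s ^ (l+1)) ((l + 1) * s ^ l) s := by
      have := Real.hasDerivAt_rpow_const (x := s) (p := l + 1) (Or.inl (ne_of_gt hs))
      simpa using this
    have h2 : HasDerivAt (fun s : ℝ => Real.exp (t * s - s ^ 3))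
        (Real.exp (t * s - s ^ 3) * (t - 3 * s ^ 2)) s := by
      have hin : HasDerivAt (fun s : ℝ => t * s - s ^ 3) (t - 3 * s ^ 2) s := by
        have := ((hasDerivAt_id s).const_mul t).sub (hasDerivAt_pow 3 s)
        simp at this; exact this
      exact hin.exp
    have e1 : s ^ (l + 3) = s ^ (l + 1) * s ^ 2 := by
      rw [← Real.rpow_natCast s 2, ← Real.rpow_add hs]
      ring_nf
    have e2 : f' s = (l + 1) * s ^ l * Real.exp (t * s - s ^ 3) +
        s ^ (l + 1) * (Real.exp (t * s - s ^ 3) * (t - 3 * s ^ 2)) := by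
      simp only [hf', e1]; ring
    rw [e2]
    exact h1.mul h2
  have hcont : ContinuousWithinAt f (Set.Ici 0) 0 := by
    apply ContinuousAt.continuousWithinAt
    have hr : ContinuousAt (fun s : ℝ => s ^ (l+1)) 0 :=
      Real.continuousAt_rpow_const 0 (l+1) (Or.inr hl1.le)
    exact hr.mul (Real.continuous_exp.continuousAt.comp
      (((continuous_const.mul continuous_id).sub (continuous_pow 3)).continuousAt))
  have htop : Filter.Tendsto f Filter.atTop (nhds 0) := by
    have hb : Filter.Tendsto (fun s : ℝ => Real.exp ((|t|+1)^2) * (s ^ (l+1) * Real.exp (-(1:ℝ) * s)))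
        Filter.atTop (nhds 0) := by
      have := (tendsto_rpow_mul_exp_neg_mul_atTop_nhds_zero (l+1) 1 one_pos).const_mul
        (Real.exp ((|t|+1)^2))
      simpa using this
    apply squeeze_zero' ?_ ?_ hb
    · filter_upwards [Filter.Ioi_mem_atTop 0] with s hs
      exact (mul_pos (Real.rpow_pos_of_pos hs _) (Real.exp_pos _)).le
    · filter_upwards [Filter.Ioi_mem_atTop 0] with s hs
      have h1 : Real.exp (t * s - s ^ 3) ≤ Real.exp ((|t|+1)^2 - s) :=
        Real.exp_le_exp.2 (key_bound t s hs)
      calc f s ≤ s ^ (l+1) * Real.exp ((|t|+1)^2 - s) :=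
            mul_le_mul_of_nonneg_left h1 (Real.rpow_nonneg hs.le _)
        _ = Real.exp ((|t|+1)^2) * (s ^ (l+1) * Real.exp (-(1:ℝ) * s)) := by
            rw [sub_eq_add_neg, Real.exp_add]; ring
  have h0 : f 0 = 0 := by
    simp [hf, Real.zero_rpow (ne_of_gt hl1)]
  have := integral_Ioi_of_hasDerivAt_of_tendsto hcont hderiv hint htop
  rw [h0, sub_zero] at this
  have hsplit : ∫ s in Set.Ioi (0:ℝ), f' s =
      (l + 1) * M l t + (t * M (l+1) t - 3 * M (l+3) t) := by
    calc ∫ s in Set.Ioi (0:ℝ), f' s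
        = (∫ s in Set.Ioi (0:ℝ), (l + 1) * (s ^ l * Real.exp (t * s - s ^ 3))) +
          ∫ s in Set.Ioi (0:ℝ), (t * (s ^ (l+1) * Real.exp (t * s - s ^ 3)) -
            3 * (s ^ (l+3) * Real.exp (t * s - s ^ 3))) :=
          integral_add ((int_M l t hl).const_mul (l+1))
            (((int_M (l+1) t (by linarith)).const_mul t).sub
              ((int_M (l+3) t (by linarith)).const_mul 3))
      _ = (∫ s in Set.Ioi (0:ℝ), (l + 1) * (s ^ l * Real.exp (t * s - s ^ 3))) +
          ((∫ s in Set.Ioi (0:ℝ), t * (s ^ (l+1) * Real.exp (t * s - s ^ 3))) -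
            ∫ s in Set.Ioi (0:ℝ), 3 * (s ^ (l+3) * Real.exp (t * s - s ^ 3))) := by
          rw [integral_sub ((int_M (l+1) t (by linarith)).const_mul t)
            ((int_M (l+3) t (by linarith)).const_mul 3)]
      _ = (l + 1) * M l t + (t * M (l+1) t - 3 * M (l+3) t) := by
          rw [MeasureTheory.integral_const_mul, MeasureTheory.integral_const_mul, MeasureTheory.integral_const_mul]; rfl
  rw [hsplit] at this
  linarith

end SexticFreud

open SexticFreud

set_option maxHeartbeats 1000000 in
/-- The first recurrence coefficient `β₁(t;λ) = μ₂(t;λ)/μ₀(t;λ)` of the generalised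
sextic Freud weight is twice differentiable and satisfies
`β₁'' + 3β₁β₁' + β₁³ − (t/3)β₁ = (λ+1)/3`. -/
theorem sextic_freud_beta_one_ode (l : ℝ) (hl : -1 < l)
    (μ₀ μ₂ β₁ : ℝ → ℝ)
    (hμ₀ : ∀ t : ℝ, μ₀ t = ∫ s in Set.Ioi (0 : ℝ), s ^ l * Real.exp (t * s - s ^ 3))
    (hμ₂ : ∀ t : ℝ, μ₂ t = ∫ s in Set.Ioi (0 : ℝ), s ^ (l + 1) * Real.exp (t * s - s ^ 3))
    (hβ₁ : ∀ t : ℝ, β₁ t = μ₂ t / μ₀ t) :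
    (Differentiable ℝ β₁ ∧ Differentiable ℝ (deriv β₁)) ∧
    ∀ t : ℝ, deriv (deriv β₁) t + 3 * β₁ t * deriv β₁ t + (β₁ t) ^ 3 - t / 3 * β₁ t
      = (l + 1) / 3 := by
  have hl1 : (-1:ℝ) < l + 1 := by linarith
  have hl2 : (-1:ℝ) < l + 2 := by linarith
  have hl3 : (-1:ℝ) < l + 3 := by linarith
  have hβ : β₁ = fun t => M (l+1) t / M l t := by
    funext t; rw [hβ₁, hμ₀, hμ₂]; rfl
  set D1 : ℝ → ℝ := fun t =>
    (M (l+2) t * M l t - M (l+1) t * M (l+1) t) / M l t ^ 2 with hD1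
  have hM0 : ∀ t, HasDerivAt (M l) (M (l+1) t) t := hasDerivAt_M l hl
  have hM1 : ∀ t, HasDerivAt (M (l+1)) (M (l+2) t) t := fun t => by
    have h := hasDerivAt_M (l+1) hl1 t
    rwa [show l+1+1 = l+2 by ring] at h
  have hM2 : ∀ t, HasDerivAt (M (l+2)) (M (l+3) t) t := fun t => by
    have h := hasDerivAt_M (l+2) hl2 t
    rwa [show l+2+1 = l+3 by ring] at h
  have hβd : ∀ t, HasDerivAt β₁ (D1 t) t := by
    intro t
    rw [hβ]
    exact (hM1 t).div (hM0 t) (pos_M l t hl).ne'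
  have hderivβ : deriv β₁ = D1 := funext fun t => (hβd t).deriv
  have hD1d : ∀ t, HasDerivAt D1
      (((M (l+3) t * M l t + M (l+2) t * M (l+1) t -
          (M (l+2) t * M (l+1) t + M (l+1) t * M (l+2) t)) * (M l t ^ 2) -
        (M (l+2) t * M l t - M (l+1) t * M (l+1) t) * (2 * M l t ^ 1 * M (l+1) t)) /
          (M l t ^ 2) ^ 2) t := by
    intro t
    have hnum : HasDerivAt (fun t => M (l+2) t * M l t - M (l+1) t * M (l+1) t)
        (M (l+3) t * M l t + M (l+2) t * M (l+1) t -
          (M (l+2) t * M (l+1) t + M (l+1) t * M (l+2) t)) t := by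
      exact ((hM2 t).mul (hM0 t)).sub ((hM1 t).mul (hM1 t))
    have hden : HasDerivAt (fun t => M l t ^ 2) (2 * M l t ^ 1 * M (l+1) t) t :=
      (hM0 t).pow 2
    exact hnum.div hden (pow_ne_zero 2 (pos_M l t hl).ne')
  constructor
  · constructor
    · exact fun t => (hβd t).differentiableAt
    · rw [hderivβ]
      exact fun t => (hD1d t).differentiableAt
  · intro t
    have hdd : deriv (deriv β₁) t =
        ((M (l+3) t * M l t + M (l+2) t * M (l+1) t -
          (M (l+2) t * M (l+1) t + M (l+1) t * M (l+2) t)) * (M l t ^ 2) -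
          (M (l+2) t * M l t - M (l+1) t * M (l+1) t) * (2 * M l t ^ 1 * M (l+1) t)) /
          (M l t ^ 2) ^ 2 := by
      rw [hderivβ]; exact (hD1d t).deriv
    rw [hdd, hderivβ, hβ]
    have hibp := ibp l hl t
    have h0 := (pos_M l t hl).ne'
    set a := M l t
    set b := M (l+1) t
    set c := M (l+2) t
    set d := M (l+3) t
    have hd : d = (t * b + (l + 1) * a) / 3 := by
      rw [eq_div_iff (by norm_num : (3:ℝ) ≠ 0)]; linarith
    rw [hD1]
    simp only
    rw [show M l t = a from rfl, show M (l+1) t = b from rfl, show M (l+2) t = c from rfl]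
    rw [hd]
    field_simp
    ring
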